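/- Fix v_T ≥ 0, v_A with v_T < v_A < 1 − v_T, and X₀ > 0, Y₀ < 0. Among all constant attacker headings φ ∈ (0, π) such that v_A sin φ > 0, the X-intercept X_f(φ) = X₀ − Y₀·(v_A cos φ − 1 − v_T)/(v_A sin φ) of the line through (X₀,Y₀) with slope (v_A sin φ)/(v_A cos φ − 1 − v_T) is maximized at cos φ = v_A/(1+v_T). -/

import Mathlib

theorem attacker_optimal_heading_lambda_pos (vT vA X₀ Y₀ : ℝ)
    (hT : 0 ≤ vT) (hA1 : vT < vA) (hA2 : vA < 1 - vT)
    (hX : 0 < X₀) (hY : Y₀ < 0) :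
    ∀ φ : ℝ, 0 < φ → φ < Real.pi → 0 < vA * Real.sin φ →
      X₀ - Y₀ * (vA * Real.cos φ - 1 - vT) / (vA * Real.sin φ) ≤
        X₀ - Y₀ * (vA * Real.cos (Real.arccos (vA / (1 + vT))) - 1 - vT) /
          (vA * Real.sin (Real.arccos (vA / (1 + vT)))) := by
  intro φ hφ0 hφπ hs
  have hvA : 0 < vA := lt_of_le_of_lt hT hA1
  have hB : (0:ℝ) < 1 + vT := by linarith
  have hBA : vA < 1 + vT := by linarith
  set B : ℝ := 1 + vT with hBdef
  set D : ℝ := Real.sqrt (B ^ 2 - vA ^ 2) with hDdef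
  have hD2 : D ^ 2 = B ^ 2 - vA ^ 2 := Real.sq_sqrt (by nlinarith)
  have hD : 0 < D := Real.sqrt_pos.mpr (by nlinarith)
  have hc0 : -1 ≤ vA / B := by
    have : (0:ℝ) ≤ vA / B := by positivity
    linarith
  have hc1 : vA / B ≤ 1 := by rw [div_le_one hB]; linarith
  have hcos : Real.cos (Real.arccos (vA / B)) = vA / B := Real.cos_arccos hc0 hc1
  have hsin : Real.sin (Real.arccos (vA / B)) = D / B := by
    rw [Real.sin_arccos, show 1 - (vA / B) ^ 2 = (D / B) ^ 2 by
      field_simp; nlinarith]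
    exact Real.sqrt_sq (by positivity)
  rw [hcos, hsin]
  have hkey : vA * Real.cos φ + D * Real.sin φ ≤ B := by
    nlinarith [Real.sin_sq_add_cos_sq φ, sq_nonneg (vA * Real.sin φ - D * Real.cos φ),
      sq_nonneg (vA * Real.cos φ + D * Real.sin φ + B)]
  have hsin' : 0 < Real.sin φ := Real.sin_pos_of_pos_of_lt_pi hφ0 hφπ
  have h2 : (vA * (vA / B) - 1 - vT) / (vA * (D / B)) = -(D / vA) := by
    rw [hBdef] at hD2 ⊢
    field_simp
    nlinarith [hD2]
  rw [mul_div_assoc, mul_div_assoc, h2]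
  have hg : (vA * Real.cos φ - 1 - vT) / (vA * Real.sin φ) ≤ -(D / vA) := by
    rw [div_le_iff₀ hs]
    have h3 : -(D / vA) * (vA * Real.sin φ) = -(D * Real.sin φ) := by
      field_simp
    rw [h3]
    linarith [hkey, hBdef]
  linarith [mul_le_mul_of_nonpos_left hg (le_of_lt hY)]
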